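/- Let ε_{k+1} = ε_k - l P_k ε_k with P_k = I_3 - u_k u_k^T, u_k unit vectors, 0 < l < 2, and suppose the persistency condition (1/(T+1)) Σ_{i=k}^{k+T} P_i ⪰ β I_3 holds for all k with T ≥ 1, β > 0. Then L_k = ‖ε_k‖² satisfies L_{k+1+T} ≤ ᾱ L_k for all k, where ᾱ = 1 - β(T+1)(2l - l²)/(2 + l² T(T+1)). -/

import Mathlib

open Matrix Finset

private lemma sum_range_cast (n : ℕ) : ∑ i ∈ Finset.range (n + 1), (i : ℝ) = n * (n + 1) / 2 := by
  induction n with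
  | zero => simp
  | succ m ih =>
    rw [Finset.sum_range_succ, ih]
    push_cast; ring

private lemma dot_self_nonneg (x : Fin 3 → ℝ) : 0 ≤ x ⬝ᵥ x :=
  Finset.sum_nonneg fun i _ => mul_self_nonneg (x i)

private lemma dot_sum_right (s : Finset ℕ) (x : Fin 3 → ℝ) (v : ℕ → Fin 3 → ℝ) :
    x ⬝ᵥ (∑ j ∈ s, v j) = ∑ j ∈ s, x ⬝ᵥ v j := by
  induction s using Finset.cons_induction with
  | empty => simp
  | cons a s ha ih => rw [Finset.sum_cons, dotProduct_add, ih, Finset.sum_cons]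

private lemma sum_mulVec' (s : Finset ℕ) (P : ℕ → Matrix (Fin 3) (Fin 3) ℝ)
    (x : Fin 3 → ℝ) : (∑ i ∈ s, P i) *ᵥ x = ∑ i ∈ s, P i *ᵥ x := by
  induction s using Finset.cons_induction with
  | empty => simp
  | cons a s ha ih => rw [Finset.sum_cons, Matrix.add_mulVec, ih, Finset.sum_cons]

/-- Cauchy–Schwarz for a sum of vectors. -/
private lemma sum_dot_le (s : Finset ℕ) (v : ℕ → Fin 3 → ℝ) :
    (∑ j ∈ s, v j) ⬝ᵥ (∑ j ∈ s, v j) ≤ (s.card : ℝ) * ∑ j ∈ s, v j ⬝ᵥ v j := by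
  have h : ∀ a : Fin 3, (∑ j ∈ s, v j a) ^ 2 ≤ (s.card : ℝ) * ∑ j ∈ s, (v j a) ^ 2 :=
    fun a => sq_sum_le_card_mul_sum_sq
  calc (∑ j ∈ s, v j) ⬝ᵥ (∑ j ∈ s, v j)
      = ∑ a : Fin 3, (∑ j ∈ s, v j a) ^ 2 := by
        simp [dotProduct, Finset.sum_apply, sq]
    _ ≤ ∑ a : Fin 3, (s.card : ℝ) * ∑ j ∈ s, (v j a) ^ 2 :=
        Finset.sum_le_sum fun a _ => h a
    _ = (s.card : ℝ) * ∑ j ∈ s, v j ⬝ᵥ v j := by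
        rw [← Finset.mul_sum, Finset.sum_comm]
        simp [dotProduct, sq]

/-- along `ε_{k+1} = ε_k - l P_k ε_k` with `P_k = I₃ - u_k u_kᵀ`, unit
vectors `u_k`, `0 < l < 2`, and persistency `(1/(T+1)) Σ_{i=k}^{k+T} P_i ⪰ β I₃` with
`T ≥ 1`, `β > 0`, the Lyapunov function `L_k = ‖ε_k‖²` satisfies `L_{k+1+T} ≤ ᾱ L_k`
where `ᾱ = 1 - β(T+1)(2l - l²)/(2 + l² T(T+1))`. -/
theorem lyapunov_horizon_contraction
    (u : ℕ → Fin 3 → ℝ) (hu : ∀ k, u k ⬝ᵥ u k = 1)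
    (P : ℕ → Matrix (Fin 3) (Fin 3) ℝ) (hP : ∀ k, P k = 1 - vecMulVec (u k) (u k))
    (l : ℝ) (hl0 : 0 < l) (hl2 : l < 2)
    (T : ℕ) (hT : 1 ≤ T) (β : ℝ) (hβ : 0 < β)
    (hpe : ∀ k : ℕ,
      (((T : ℝ) + 1)⁻¹ • ∑ i ∈ Finset.Icc k (k + T), P i
        - β • (1 : Matrix (Fin 3) (Fin 3) ℝ)).PosSemidef)
    (ε : ℕ → Fin 3 → ℝ) (hrec : ∀ k, ε (k + 1) = ε k - l • (P k).mulVec (ε k))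
    (L : ℕ → ℝ) (hL : ∀ k, L k = ε k ⬝ᵥ ε k)
    (α : ℝ) (hα : α = 1 - β * (T + 1) * (2 * l - l ^ 2) / (2 + l ^ 2 * T * (T + 1))) :
    ∀ k, L (k + 1 + T) ≤ α * L k := by
  -- explicit action of P k
  have hPv : ∀ k (x : Fin 3 → ℝ), (P k) *ᵥ x = x - (u k ⬝ᵥ x) • u k := by
    intro k x
    rw [hP, Matrix.sub_mulVec, Matrix.one_mulVec]
    congr 1
    funext i
    simp [Matrix.mulVec, Matrix.vecMulVec, dotProduct, Finset.mul_sum, mul_assoc,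
      mul_comm, mul_left_comm]
  -- P is a projection w.r.t. the dot product
  have hBproj : ∀ k (x : Fin 3 → ℝ), x ⬝ᵥ ((P k) *ᵥ x) = ((P k) *ᵥ x) ⬝ᵥ ((P k) *ᵥ x) := by
    intro k x
    have h1 := hu k
    rw [hPv]
    simp only [dotProduct_sub, sub_dotProduct, dotProduct_smul, smul_dotProduct,
      smul_eq_mul]
    rw [dotProduct_comm (u k) x, h1]
    ring
  -- contraction
  have hC : ∀ k (x : Fin 3 → ℝ), ((P k) *ᵥ x) ⬝ᵥ ((P k) *ᵥ x) ≤ x ⬝ᵥ x := by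
    intro k x
    have h1 := hu k
    rw [hPv]
    simp only [dotProduct_sub, sub_dotProduct, dotProduct_smul, smul_dotProduct,
      smul_eq_mul]
    rw [dotProduct_comm (u k) x, h1]
    nlinarith [sq_nonneg (x ⬝ᵥ u k)]
  set q : ℕ → ℝ := fun i => ε i ⬝ᵥ ((P i) *ᵥ ε i) with hq
  have hq0 : ∀ i, 0 ≤ q i := by
    intro i
    show 0 ≤ ε i ⬝ᵥ ((P i) *ᵥ ε i)
    rw [hBproj]
    exact dot_self_nonneg _
  -- one-step decrease
  have hstep : ∀ j, L (j + 1) = L j - (2 * l - l ^ 2) * q j := by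
    intro j
    rw [hL, hL, hrec j]
    simp only [dotProduct_sub, sub_dotProduct, dotProduct_smul, smul_dotProduct,
      smul_eq_mul]
    rw [dotProduct_comm ((P j) *ᵥ ε j) (ε j), ← hBproj j (ε j)]
    ring
  intro k
  -- total decrease over the horizon
  have htel : ∀ m, L (k + m + 1) = L k - (2 * l - l ^ 2) * ∑ j ∈ Finset.Icc k (k + m), q j := by
    intro m
    induction m with
    | zero => simp [hstep k]
    | succ m ih =>
      have : k + (m + 1) + 1 = (k + m + 1) + 1 := by ring
      rw [this, hstep (k + m + 1)]
      rw [show k + (m+1) = (k+m)+1 from rfl, Finset.sum_Icc_succ_top (by omega : k ≤ k + m + 1)]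
      rw [ih]; ring
  -- evolution formula
  have hev : ∀ m, ε (k + m) = ε k - l • ∑ j ∈ Finset.Ico k (k + m), (P j) *ᵥ ε j := by
    intro m
    induction m with
    | zero => simp
    | succ m ih =>
      rw [show k + (m+1) = (k+m)+1 from rfl, hrec (k + m),
        Finset.sum_Ico_succ_top (by omega : k ≤ k + m), ih]
      rw [smul_add]
      abel
  set S : ℝ := ∑ j ∈ Finset.Icc k (k + T), q j with hS
  -- partial sums bounded by S
  have hpart : ∀ i, i ≤ k + T → ∑ j ∈ Finset.Ico k i, q j ≤ S := by
    intro i hi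
    apply Finset.sum_le_sum_of_subset_of_nonneg
    · intro j hj
      simp only [Finset.mem_Ico] at hj
      simp only [Finset.mem_Icc]
      omega
    · intro j _ _; exact hq0 j
  -- key per-term bound
  have hkey : ∀ i ∈ Finset.Icc k (k + T),
      ε k ⬝ᵥ ((P i) *ᵥ ε k) ≤ 2 * q i + 2 * l ^ 2 * ((i : ℝ) - k) * S := by
    intro i hi
    simp only [Finset.mem_Icc] at hi
    obtain ⟨hik, hikT⟩ := hi
    obtain ⟨m, rfl⟩ := Nat.exists_eq_add_of_le hik
    set w : Fin 3 → ℝ := ∑ j ∈ Finset.Ico k (k + m), (P j) *ᵥ ε j with hw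
    have hε : ε k = ε (k + m) + l • w := by rw [hev m]; abel
    have hlin : (P (k + m)) *ᵥ ε k = (P (k + m)) *ᵥ ε (k + m) + l • ((P (k + m)) *ᵥ w) := by
      rw [hε, Matrix.mulVec_add, Matrix.mulVec_smul]
    -- ‖a + b‖² ≤ 2‖a‖² + 2‖b‖²
    have habs : ∀ a b : Fin 3 → ℝ, (a + b) ⬝ᵥ (a + b) ≤ 2 * (a ⬝ᵥ a) + 2 * (b ⬝ᵥ b) := by
      intro a b
      have h0 := dot_self_nonneg (a - b)
      simp only [dotProduct_sub, sub_dotProduct, dotProduct_add, add_dotProduct] at h0 ⊢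
      rw [dotProduct_comm b a] at h0 ⊢
      linarith
    have hww : ((P (k + m)) *ᵥ w) ⬝ᵥ ((P (k + m)) *ᵥ w) ≤ (m : ℝ) * S := by
      calc ((P (k + m)) *ᵥ w) ⬝ᵥ ((P (k + m)) *ᵥ w) ≤ w ⬝ᵥ w := hC _ _
        _ ≤ ((Finset.Ico k (k + m)).card : ℝ) *
            ∑ j ∈ Finset.Ico k (k + m), ((P j) *ᵥ ε j) ⬝ᵥ ((P j) *ᵥ ε j) :=
          sum_dot_le _ _
        _ = (m : ℝ) * ∑ j ∈ Finset.Ico k (k + m), q j := by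
          rw [Nat.card_Ico]
          congr 1
          · norm_num
          · exact Finset.sum_congr rfl fun j _ => (hBproj j (ε j)).symm
        _ ≤ (m : ℝ) * S := by
          apply mul_le_mul_of_nonneg_left (hpart _ (by omega)) (by positivity)
    calc ε k ⬝ᵥ ((P (k + m)) *ᵥ ε k)
        = ((P (k + m)) *ᵥ ε k) ⬝ᵥ ((P (k + m)) *ᵥ ε k) := hBproj _ _
      _ = ((P (k + m)) *ᵥ ε (k + m) + l • ((P (k + m)) *ᵥ w)) ⬝ᵥ
          ((P (k + m)) *ᵥ ε (k + m) + l • ((P (k + m)) *ᵥ w)) := by rw [hlin]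
      _ ≤ 2 * (((P (k + m)) *ᵥ ε (k + m)) ⬝ᵥ ((P (k + m)) *ᵥ ε (k + m)))
          + 2 * ((l • ((P (k + m)) *ᵥ w)) ⬝ᵥ (l • ((P (k + m)) *ᵥ w))) := habs _ _
      _ = 2 * q (k + m) + 2 * l ^ 2 * (((P (k + m)) *ᵥ w) ⬝ᵥ ((P (k + m)) *ᵥ w)) := by
          rw [← hBproj (k + m) (ε (k + m))]
          simp only [dotProduct_smul, smul_dotProduct, smul_eq_mul]
          ring
      _ ≤ 2 * q (k + m) + 2 * l ^ 2 * ((m : ℝ) * S) := by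
          have hl2' : (0:ℝ) ≤ 2 * l ^ 2 := by positivity
          nlinarith
      _ = 2 * q (k + m) + 2 * l ^ 2 * (((k + m : ℕ) : ℝ) - k) * S := by
          push_cast; ring
  -- persistency lower bound
  have hpe' : β * ((T : ℝ) + 1) * L k ≤ ∑ i ∈ Finset.Icc k (k + T), ε k ⬝ᵥ ((P i) *ᵥ ε k) := by
    have h0 := (hpe k).dotProduct_mulVec_nonneg (ε k)
    rw [star_trivial] at h0
    rw [Matrix.sub_mulVec, Matrix.smul_mulVec, Matrix.smul_mulVec,
      Matrix.one_mulVec, sum_mulVec', dotProduct_sub, dotProduct_smul, dotProduct_smul,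
      dot_sum_right] at h0
    have hT1 : (0:ℝ) < (T : ℝ) + 1 := by positivity
    rw [hL]
    simp only [smul_eq_mul] at h0
    have h2 : β * (ε k ⬝ᵥ ε k) ≤ ((T : ℝ) + 1)⁻¹ * ∑ i ∈ Finset.Icc k (k + T), ε k ⬝ᵥ ((P i) *ᵥ ε k) := by
      linarith
    calc β * ((T : ℝ) + 1) * (ε k ⬝ᵥ ε k)
        = ((T : ℝ) + 1) * (β * (ε k ⬝ᵥ ε k)) := by ring
      _ ≤ ((T : ℝ) + 1) * (((T : ℝ) + 1)⁻¹ * ∑ i ∈ Finset.Icc k (k + T), ε k ⬝ᵥ ((P i) *ᵥ ε k)) :=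
          mul_le_mul_of_nonneg_left h2 (le_of_lt hT1)
      _ = ∑ i ∈ Finset.Icc k (k + T), ε k ⬝ᵥ ((P i) *ᵥ ε k) := by
          rw [← mul_assoc, mul_inv_cancel₀ (ne_of_gt hT1), one_mul]
  -- sum the per-term bounds
  have hsumkey : ∑ i ∈ Finset.Icc k (k + T), ε k ⬝ᵥ ((P i) *ᵥ ε k)
      ≤ 2 * S + l ^ 2 * T * (T + 1) * S := by
    calc ∑ i ∈ Finset.Icc k (k + T), ε k ⬝ᵥ ((P i) *ᵥ ε k)
        ≤ ∑ i ∈ Finset.Icc k (k + T), (2 * q i + 2 * l ^ 2 * ((i : ℝ) - k) * S) :=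
          Finset.sum_le_sum hkey
      _ = 2 * S + 2 * l ^ 2 * S * ∑ i ∈ Finset.Icc k (k + T), ((i : ℝ) - k) := by
          rw [Finset.sum_add_distrib, ← Finset.mul_sum, Finset.mul_sum]
          congr 1
          rw [Finset.mul_sum]
          exact Finset.sum_congr rfl fun i _ => by ring
      _ = 2 * S + l ^ 2 * T * (T + 1) * S := by
          have : ∑ i ∈ Finset.Icc k (k + T), ((i : ℝ) - k) = T * (T + 1) / 2 := by
            rw [show Finset.Icc k (k + T) = Finset.Ico k (k + T + 1) by
              rw [Finset.Ico_add_one_right_eq_Icc]]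
            rw [Finset.sum_Ico_eq_sum_range]
            simp only [show k + T + 1 - k = T + 1 from by omega]
            have : ∀ i : ℕ, ((k + i : ℕ) : ℝ) - k = i := by intro i; push_cast; ring
            rw [Finset.sum_congr rfl fun i _ => this i, sum_range_cast]
          rw [this]; ring
  -- conclude
  have hLS : β * ((T : ℝ) + 1) * L k ≤ (2 + l ^ 2 * T * (T + 1)) * S := by
    calc β * ((T : ℝ) + 1) * L k ≤ ∑ i ∈ Finset.Icc k (k + T), ε k ⬝ᵥ ((P i) *ᵥ ε k) := hpe'
      _ ≤ 2 * S + l ^ 2 * T * (T + 1) * S := hsumkey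
      _ = (2 + l ^ 2 * T * (T + 1)) * S := by ring
  have hD : (0:ℝ) < 2 + l ^ 2 * T * (T + 1) := by positivity
  have hc : (0:ℝ) < 2 * l - l ^ 2 := by nlinarith
  have hLfin : L (k + 1 + T) = L k - (2 * l - l ^ 2) * S := by
    rw [show k + 1 + T = k + T + 1 from by ring, htel T]
  have hLk : 0 ≤ L k := by rw [hL]; exact dot_self_nonneg _
  rw [hLfin, hα]
  have key : β * ((T:ℝ) + 1) * (2 * l - l ^ 2) / (2 + l ^ 2 * ↑T * (↑T + 1)) * L k
      ≤ (2 * l - l ^ 2) * S := by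
    rw [div_mul_eq_mul_div, div_le_iff₀ hD]
    calc β * ((T:ℝ) + 1) * (2 * l - l ^ 2) * L k
        = (2 * l - l ^ 2) * (β * ((T:ℝ) + 1) * L k) := by ring
      _ ≤ (2 * l - l ^ 2) * ((2 + l ^ 2 * ↑T * (↑T + 1)) * S) :=
          mul_le_mul_of_nonneg_left hLS (le_of_lt hc)
      _ = (2 * l - l ^ 2) * S * (2 + l ^ 2 * ↑T * (↑T + 1)) := by ring
  have expand : (1 - β * ((T:ℝ) + 1) * (2 * l - l ^ 2) / (2 + l ^ 2 * ↑T * (↑T + 1))) * L k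
      = L k - β * ((T:ℝ) + 1) * (2 * l - l ^ 2) / (2 + l ^ 2 * ↑T * (↑T + 1)) * L k := by ring
  rw [expand]
  linarith
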